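/- Let $b \ge 1$ and consider the linear ODE system on $\mathbb{R}^b$: $\dot{x}_k = 2\lambda a_{k-1}(t) x_{k-1} - 2\lambda a_k(t) x_k - x_k + x_{k+1}$ for $1 \le k \le b$, with conventions $x_0 \equiv 0$, $x_{b+1} \equiv 0$, where $\lambda > 0$ and $a_k(t) \ge 0$ for all $k, t$. Then $V_1(t) = \sum_{k=1}^b |x_k(t)|$ is non-increasing along every solution; in particular $|x(t)|_1 \le |x(0)|_1$ for all $t \ge 0$. -/

import Mathlib

open Filter Set Finset Topology

/-- `Real.sign y * y = |y|`. -/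
lemma sign_mul_self_eq_abs (y : ℝ) : Real.sign y * y = |y| := by
  rcases lt_trichotomy y 0 with h | h | h
  · rw [Real.sign_of_neg h, abs_of_neg h]; ring
  · simp [h]
  · rw [Real.sign_of_pos h, abs_of_pos h]; ring

lemma abs_sign_le_one (y : ℝ) : |Real.sign y| ≤ 1 := by
  rcases lt_trichotomy y 0 with h | h | h
  · rw [Real.sign_of_neg h]; norm_num
  · simp [h]
  · rw [Real.sign_of_pos h]; norm_num

/-- Key algebraic inequality. -/
lemma key_sign_ineq (b : ℕ) (lam : ℝ) (hlam : 0 < lam) (A X s : ℕ → ℝ)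
    (hA : ∀ k, 0 ≤ A k) (hX0 : X 0 = 0) (hXb : X (b + 1) = 0)
    (hs1 : ∀ k, |s k| ≤ 1) (hs2 : ∀ k, s k * X k = |X k|) :
    ∑ k ∈ Finset.Icc 1 b,
      s k * (2 * lam * A (k - 1) * X (k - 1) - 2 * lam * A k * X k - X k + X (k + 1)) ≤ 0 := by
  set F : ℕ → ℝ := fun k => 2 * lam * A k * |X k| with hF
  set G : ℕ → ℝ := fun k => |X k| with hG
  have term : ∀ k, 1 ≤ k →
      s k * (2 * lam * A (k - 1) * X (k - 1) - 2 * lam * A k * X k - X k + X (k + 1))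
        ≤ (F (k - 1) - F k) + (G (k + 1) - G k) := by
    intro k hk
    have h1 : s k * X (k - 1) ≤ |X (k - 1)| := by
      calc s k * X (k - 1) ≤ |s k * X (k - 1)| := le_abs_self _
        _ = |s k| * |X (k - 1)| := abs_mul _ _
        _ ≤ 1 * |X (k - 1)| := mul_le_mul_of_nonneg_right (hs1 k) (abs_nonneg _)
        _ = |X (k - 1)| := one_mul _
    have h3 : s k * X (k + 1) ≤ |X (k + 1)| := by
      calc s k * X (k + 1) ≤ |s k * X (k + 1)| := le_abs_self _
        _ = |s k| * |X (k + 1)| := abs_mul _ _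
        _ ≤ 1 * |X (k + 1)| := mul_le_mul_of_nonneg_right (hs1 k) (abs_nonneg _)
        _ = |X (k + 1)| := one_mul _
    have h2 : s k * X k = |X k| := hs2 k
    have hA' : (0:ℝ) ≤ 2 * lam * A (k - 1) := mul_nonneg (by positivity) (hA _)
    have e1 : (2 * lam * A (k - 1)) * (s k * X (k - 1)) ≤ 2 * lam * A (k - 1) * |X (k - 1)| :=
      mul_le_mul_of_nonneg_left h1 hA'
    have expand : s k * (2 * lam * A (k - 1) * X (k - 1) - 2 * lam * A k * X k - X k + X (k + 1))
        = (2 * lam * A (k - 1)) * (s k * X (k - 1)) - 2 * lam * A k * (s k * X k)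
          - (s k * X k) + s k * X (k + 1) := by ring
    rw [expand, h2, hF, hG]
    simp only
    nlinarith [e1, h3]
  have reindex : ∑ k ∈ Finset.Icc 1 b,
      s k * (2 * lam * A (k - 1) * X (k - 1) - 2 * lam * A k * X k - X k + X (k + 1))
      = ∑ i ∈ Finset.range b, (fun k =>
        s k * (2 * lam * A (k - 1) * X (k - 1) - 2 * lam * A k * X k - X k + X (k + 1))) (i + 1) := by
    rw [← Finset.Ico_add_one_right_eq_Icc, Finset.sum_Ico_eq_sum_range]
    simp [Nat.add_comm]
  rw [reindex]
  have step : ∑ i ∈ Finset.range b, (fun k =>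
        s k * (2 * lam * A (k - 1) * X (k - 1) - 2 * lam * A k * X k - X k + X (k + 1))) (i + 1)
      ≤ ∑ i ∈ Finset.range b, ((F i - F (i + 1)) + (G (i + 1 + 1) - G (i + 1))) := by
    apply Finset.sum_le_sum
    intro i _
    have := term (i + 1) (Nat.le_add_left 1 i)
    simpa using this
  refine step.trans ?_
  rw [Finset.sum_add_distrib, Finset.sum_range_sub' F,
    Finset.sum_range_sub (fun i => G (i + 1))]
  have hF0 : F 0 = 0 := by simp [hF, hX0]
  have hGb : G (b + 1) = 0 := by simp [hG, hXb]
  have hFb : 0 ≤ F b := mul_nonneg (mul_nonneg (by positivity) (hA b)) (abs_nonneg _)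
  have hG1 : 0 ≤ G 1 := abs_nonneg _
  rw [hF0, hGb]
  linarith

/-- The right slope of `|g|` tends to `sign * d` where `g` has derivative `d`. -/
lemma tendsto_slope_abs {g : ℝ → ℝ} {τ d : ℝ} (hg : HasDerivAt g d τ) :
    Tendsto (slope (fun u => |g u|) τ) (𝓝[>] τ)
      (𝓝 ((if g τ = 0 then Real.sign d else Real.sign (g τ)) * d)) := by
  have base : Tendsto (slope g τ) (𝓝[>] τ) (𝓝 d) :=
    (hasDerivAt_iff_tendsto_slope.1 hg).mono_left
      (nhdsWithin_mono τ (fun z hz => ne_of_gt hz))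
  by_cases h0 : g τ = 0
  · rw [if_pos h0]
    have habs : Tendsto (fun z => |slope g τ z|) (𝓝[>] τ) (𝓝 |d|) := base.abs
    have heq : ∀ᶠ z in 𝓝[>] τ, |slope g τ z| = slope (fun u => |g u|) τ z := by
      filter_upwards [self_mem_nhdsWithin] with z hz
      have hpos : (0:ℝ) < z - τ := sub_pos.2 hz
      rw [slope_def_field, slope_def_field, h0, abs_zero, sub_zero, sub_zero, abs_div,
        abs_of_pos hpos]
    have := habs.congr' heq
    rwa [← sign_mul_self_eq_abs d] at this
  · rw [if_neg h0]
    rcases lt_or_gt_of_ne h0 with hneg | hpos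
    · have hev : ∀ᶠ z in 𝓝[>] τ, g z < 0 :=
        (hg.continuousAt.eventually_mem (Iio_mem_nhds hneg)).filter_mono nhdsWithin_le_nhds
      have heq : ∀ᶠ z in 𝓝[>] τ, -slope g τ z = slope (fun u => |g u|) τ z := by
        filter_upwards [hev] with z hz
        rw [slope_def_field, slope_def_field, abs_of_neg hz, abs_of_neg hneg]
        ring
      have := base.neg.congr' heq
      rwa [Real.sign_of_neg hneg, neg_one_mul]
    · have hev : ∀ᶠ z in 𝓝[>] τ, 0 < g z :=
        (hg.continuousAt.eventually_mem (Ioi_mem_nhds hpos)).filter_mono nhdsWithin_le_nhds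
      have heq : ∀ᶠ z in 𝓝[>] τ, slope g τ z = slope (fun u => |g u|) τ z := by
        filter_upwards [hev] with z hz
        rw [slope_def_field, slope_def_field, abs_of_pos hz, abs_of_pos hpos]
      have := base.congr' heq
      rwa [Real.sign_of_pos hpos, one_mul]

/-- The `ℓ¹` norm is non-increasing along the first-order (variational) system. -/
theorem stmt11 (b : ℕ) (hb : 1 ≤ b) (lam : ℝ) (hlam : 0 < lam)
    (a : ℝ → ℕ → ℝ) (ha : ∀ t k, 0 ≤ a t k)
    (x : ℝ → ℕ → ℝ) (hx0 : ∀ t, x t 0 = 0) (hxb : ∀ t, x t (b + 1) = 0)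
    (hode : ∀ t, ∀ k, 1 ≤ k → k ≤ b →
      HasDerivAt (fun u => x u k)
        (2 * lam * a t (k - 1) * x t (k - 1) - 2 * lam * a t k * x t k
          - x t k + x t (k + 1)) t) :
    AntitoneOn (fun t => ∑ k ∈ Finset.Icc 1 b, |x t k|) (Set.Ici (0 : ℝ)) ∧
    ∀ t, 0 ≤ t →
      ∑ k ∈ Finset.Icc 1 b, |x t k| ≤ ∑ k ∈ Finset.Icc 1 b, |x 0 k| := by
  set V : ℝ → ℝ := fun t => ∑ k ∈ Finset.Icc 1 b, |x t k| with hV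
  have hcont : ∀ k ∈ Finset.Icc 1 b, Continuous (fun u => x u k) := by
    intro k hk
    obtain ⟨hk1, hk2⟩ := Finset.mem_Icc.1 hk
    exact continuous_iff_continuousAt.2 fun t => (hode t k hk1 hk2).continuousAt
  have hVcont : Continuous V :=
    continuous_finset_sum _ (fun k hk => (hcont k hk).abs)
  have mono : ∀ u t : ℝ, u ≤ t → V t ≤ V u := by
    intro u t hut
    have main : ∀ ⦃z⦄, z ∈ Set.Icc u t → V z ≤ (fun _ : ℝ => V u) z := by
      apply image_le_of_liminf_slope_right_le_deriv_boundary
        (B := fun _ => V u) (B' := fun _ => 0)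
        hVcont.continuousOn le_rfl continuousOn_const
        (fun τ _ => hasDerivWithinAt_const τ _ (V u))
      intro τ _ r hr
      -- the derivative candidates at time τ
      set d : ℕ → ℝ := fun k =>
        2 * lam * a τ (k - 1) * x τ (k - 1) - 2 * lam * a τ k * x τ k - x τ k + x τ (k + 1)
        with hd
      set s : ℕ → ℝ := fun k => if x τ k = 0 then Real.sign (d k) else Real.sign (x τ k) with hs
      have hslope : Tendsto (slope V τ) (𝓝[>] τ) (𝓝 (∑ k ∈ Finset.Icc 1 b, s k * d k)) := by
        have hsum : ∀ z, slope V τ z = ∑ k ∈ Finset.Icc 1 b,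
            slope (fun u => |x u k|) τ z := by
          intro z
          simp only [slope_def_field, hV]
          rw [← Finset.sum_sub_distrib, Finset.sum_div]
        rw [show (slope V τ) = fun z => ∑ k ∈ Finset.Icc 1 b,
            slope (fun u => |x u k|) τ z from funext hsum]
        apply tendsto_finset_sum
        intro k hk
        obtain ⟨hk1, hk2⟩ := Finset.mem_Icc.1 hk
        exact tendsto_slope_abs (hode τ k hk1 hk2)
      have hL0 : ∑ k ∈ Finset.Icc 1 b, s k * d k ≤ 0 := by
        apply key_sign_ineq b lam hlam (a τ) (x τ) s (ha τ) (hx0 τ) (hxb τ)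
        · intro k
          rw [hs]
          by_cases h : x τ k = 0
          · simp only [if_pos h]; exact abs_sign_le_one _
          · simp only [if_neg h]; exact abs_sign_le_one _
        · intro k
          rw [hs]
          by_cases h : x τ k = 0
          · simp [h]
          · simp only [if_neg h]; exact sign_mul_self_eq_abs _
      have : ∀ᶠ z in 𝓝[>] τ, slope V τ z < r :=
        hslope.eventually_lt_const (lt_of_le_of_lt hL0 hr)
      exact this.frequently
    exact main (Set.right_mem_Icc.2 hut)
  refine ⟨fun u hu t ht hut => mono u t hut, fun t ht => mono 0 t ht⟩
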